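/- For every d ≥ 5 and every finite poset P on [d], the number of maximal chains c(P) satisfies c(P) ≤ 3^k if d = 3k, c(P) ≤ 4·3^{k-1} if d = 3k+1, and c(P) ≤ 2·3^k if d = 3k+2. Moreover this bound is attained by some poset on [d]. -/

import Mathlib

/-- maximal number of maximal chains of a poset with `n` elements -/
def gbd : ℕ → ℕ
  | 0 => 1
  | 1 => 1
  | 2 => 2
  | 3 => 3
  | 4 => 4
  | (n+5) => 3 * gbd (n+2)

lemma gbd_pos' : ∀ n, 1 ≤ gbd n
  | 0 => by simp [gbd]
  | 1 => by simp [gbd]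
  | 2 => by simp [gbd]
  | 3 => by simp [gbd]
  | 4 => by simp [gbd]
  | (n+5) => by
      have := gbd_pos' (n+2)
      show 1 ≤ 3 * gbd (n+2)
      omega

lemma gbd_step (n : ℕ) (h : 2 ≤ n) : gbd (n+3) = 3 * gbd n := by
  obtain ⟨m, rfl⟩ : ∃ m, n = m + 2 := ⟨n - 2, by omega⟩
  rfl

lemma gbd_mono_succ : ∀ n, gbd n ≤ gbd (n+1)
  | 0 => by simp [gbd]
  | 1 => by simp [gbd]
  | 2 => by simp [gbd]
  | 3 => by simp [gbd]
  | 4 => by simp [gbd]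
  | (n+5) => by
      have h := gbd_mono_succ (n+2)
      show 3 * gbd (n+2) ≤ gbd ((n+1)+5)
      show 3 * gbd (n+2) ≤ 3 * gbd (n+3)
      exact Nat.mul_le_mul_left 3 h

lemma gbd_mono : Monotone gbd := monotone_nat_of_le_succ gbd_mono_succ

lemma gbd_two_mul : ∀ n, 2 * gbd n ≤ gbd (n+2)
  | 0 => by simp [gbd]
  | 1 => by simp [gbd]
  | 2 => by simp [gbd]
  | 3 => by show 2 * 3 ≤ 3 * gbd 2; simp [gbd]
  | 4 => by show 2 * 4 ≤ 3 * gbd 3; simp [gbd]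
  | (n+5) => by
      have h := gbd_two_mul (n+2)
      show 2 * (3 * gbd (n+2)) ≤ gbd ((n+2)+5)
      show 2 * (3 * gbd (n+2)) ≤ 3 * gbd (n+4)
      calc 2 * (3 * gbd (n+2)) = 3 * (2 * gbd (n+2)) := by ring
        _ ≤ 3 * gbd (n+4) := Nat.mul_le_mul_left 3 h

lemma gbd_three_mul : ∀ n, 3 * gbd n ≤ gbd (n+3)
  | 0 => by simp [gbd]
  | 1 => by show 3 * 1 ≤ 4; norm_num
  | (n+2) => le_of_eq (gbd_step (n+2) (by omega)).symm

lemma gbd_key : ∀ a m, 1 ≤ a → a * gbd m ≤ gbd (m + a)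
  | 1, m, _ => by simpa using gbd_mono_succ m
  | 2, m, _ => gbd_two_mul m
  | 3, m, _ => gbd_three_mul m
  | 4, m, _ => by
      calc 4 * gbd m ≤ 2 * (2 * gbd m) := by omega
        _ ≤ 2 * gbd (m+2) := Nat.mul_le_mul_left 2 (gbd_two_mul m)
        _ ≤ gbd (m+4) := gbd_two_mul (m+2)
  | (a+5), m, _ => by
      have h1 : (a+2) * gbd m ≤ gbd (m + (a+2)) := gbd_key (a+2) m (by omega)
      have h2 : 3 * gbd (m + (a+2)) ≤ gbd (m + (a+5)) := by
        have h := gbd_three_mul (m + (a+2))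
        rwa [show m+(a+2)+3 = m+(a+5) from by omega] at h
      calc (a+5) * gbd m ≤ (3*(a+2)) * gbd m := Nat.mul_le_mul_right _ (by omega)
        _ = 3 * ((a+2) * gbd m) := by ring
        _ ≤ 3 * gbd (m + (a+2)) := Nat.mul_le_mul_left 3 h1
        _ ≤ gbd (m + (a+5)) := h2

lemma gbd_3k : ∀ k, gbd (3*k) = 3^k
  | 0 => rfl
  | 1 => rfl
  | (k+2) => by
      have h : gbd (3*(k+1) + 3) = 3 * gbd (3*(k+1)) := gbd_step _ (by omega)
      have h2 := gbd_3k (k+1)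
      have : 3*(k+2) = 3*(k+1)+3 := by ring
      rw [this, h, h2, pow_succ]
      ring

lemma gbd_3k1 : ∀ k, 1 ≤ k → gbd (3*k+1) = 4 * 3^(k-1)
  | 1, _ => rfl
  | (k+2), _ => by
      have h : gbd ((3*(k+1)+1) + 3) = 3 * gbd (3*(k+1)+1) := gbd_step _ (by omega)
      have h2 := gbd_3k1 (k+1) (by omega)
      have e : 3*(k+2)+1 = (3*(k+1)+1)+3 := by ring
      rw [e, h, h2]
      have : (k+2)-1 = (k+1-1)+1 := by omega
      rw [this, pow_succ]
      ring

lemma gbd_3k2 : ∀ k, gbd (3*k+2) = 2 * 3^k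
  | 0 => rfl
  | (k+1) => by
      have h : gbd ((3*k+2) + 3) = 3 * gbd (3*k+2) := gbd_step _ (by omega)
      have h2 := gbd_3k2 k
      have e : 3*(k+1)+2 = (3*k+2)+3 := by ring
      rw [e, h, h2, pow_succ]
      ring


section Upper

variable {α : Type*} [Fintype α] [DecidableEq α] [PartialOrder α]

/-- maximal chains of the subposet on `s` -/
def MCI (s : Finset α) (C : Set α) : Prop :=
  C ⊆ ↑s ∧ IsChain (· ≤ ·) C ∧
    ∀ D : Set α, D ⊆ ↑s → IsChain (· ≤ ·) D → C ⊆ D → C = D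

lemma card_MCI_empty : Nat.card {C : Set α // MCI (∅ : Finset α) C} ≤ 1 := by
  have hsub : Subsingleton {C : Set α // MCI (∅ : Finset α) C} := by
    constructor
    rintro ⟨C, hC⟩ ⟨D, hD⟩
    have h1 : C = ∅ := Set.subset_empty_iff.mp (by simpa using hC.1)
    have h2 : D = ∅ := Set.subset_empty_iff.mp (by simpa using hD.1)
    simp [h1, h2]
  exact Finite.card_le_one_iff_subsingleton.mpr hsub

lemma card_MCI_le : ∀ (n : ℕ) (s : Finset α), s.card ≤ n →
    Nat.card {C : Set α // MCI s C} ≤ gbd s.card := by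
  intro n
  induction n with
  | zero =>
    intro s hs
    have hse : s = ∅ := Finset.card_eq_zero.mp (by omega)
    subst hse
    exact le_trans card_MCI_empty (gbd_pos' _)
  | succ n IH =>
    intro s hs
    classical
    by_cases hse : s = ∅
    · subst hse
      exact le_trans card_MCI_empty (gbd_pos' _)
    have hsne : s.Nonempty := Finset.nonempty_iff_ne_empty.mpr hse
    -- minimal elements
    set A : Finset α := s.filter (fun x => ∀ y ∈ s, ¬ y < x) with hA
    have hAs : A ⊆ s := Finset.filter_subset _ _
    have hAne : A.Nonempty := by
      obtain ⟨m, hm, hmin⟩ := s.exists_minimal hsne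
      exact ⟨m, Finset.mem_filter.mpr ⟨hm, fun y hy hlt => not_le_of_gt hlt (hmin hy hlt.le)⟩⟩
    -- upper sets
    set U : α → Finset α := fun x => s.filter (fun y => x < y) with hU
    -- every maximal chain has a least element which is minimal; rest is max chain in U
    have main : ∀ C : Set α, MCI s C → ∃ x, x ∈ A ∧ x ∈ C ∧ MCI (U x) (C \ {x}) := by
      intro C hC
      obtain ⟨hCs, hCch, hCmax⟩ := hC
      have hCne : C.Nonempty := by
        by_contra h
        have hCemp : C = ∅ := Set.not_nonempty_iff_eq_empty.mp h
        obtain ⟨m, hm⟩ := hsne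
        have := hCmax {m} (by simpa using hm) (IsChain.singleton) (by simp [hCemp])
        rw [hCemp] at this
        exact (Set.singleton_ne_empty m) this.symm
      have hCfin : C.Finite := Set.toFinite C
      obtain ⟨x, hxC, hxmin⟩ := (hCfin.toFinset).exists_minimal
        (hCfin.toFinset_nonempty.mpr hCne)
      rw [Set.Finite.mem_toFinset] at hxC
      have hxle : ∀ y ∈ C, x ≤ y := by
        intro y hy
        rcases eq_or_ne y x with rfl | hne
        · exact le_refl _
        · rcases hCch hy hxC hne with h | h
          · exact hxmin (Set.Finite.mem_toFinset _ |>.mpr hy) h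
          · exact h
      refine ⟨x, ?_, hxC, ?_, ?_, ?_⟩
      · -- x minimal in s
        rw [hA, Finset.mem_filter]
        refine ⟨hCs hxC, fun y hy hlt => ?_⟩
        have hych : IsChain (· ≤ ·) (insert y C) := by
          refine hCch.insert (fun z hz _ => ?_)
          exact Or.inl (le_trans hlt.le (hxle z hz))
        have heq := hCmax (insert y C) ?_ hych (Set.subset_insert _ _)
        · have hyC : y ∈ C := by rw [heq]; exact Set.mem_insert _ _
          exact absurd (hxle y hyC) (not_le_of_gt hlt)
        · intro z hz
          rcases hz with rfl | hz
          · exact hy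
          · exact hCs hz
      · -- C \ {x} ⊆ U x
        intro y hy
        obtain ⟨hyC, hyx⟩ := hy
        rw [hU]
        simp only [Finset.coe_filter, Set.mem_setOf_eq]
        exact ⟨hCs hyC, lt_of_le_of_ne (hxle y hyC) (Ne.symm hyx)⟩
      · exact hCch.mono Set.diff_subset
      · -- maximality in U x
        intro D hDU hDch hsub
        have hxD : ∀ z ∈ D, x < z := by
          intro z hz
          have h := hDU hz
          rw [hU] at h
          simp only [Finset.coe_filter, Set.mem_setOf_eq] at h
          exact h.2
        have hch : IsChain (· ≤ ·) (insert x D) :=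
          hDch.insert (fun z hz _ => Or.inl (hxD z hz).le)
        have hCsub : C ⊆ insert x D := by
          intro z hz
          rcases eq_or_ne z x with rfl | hne
          · exact Set.mem_insert _ _
          · exact Set.mem_insert_of_mem _ (hsub ⟨hz, hne⟩)
        have hDs : (insert x D : Set α) ⊆ ↑s := by
          intro z hz
          rcases hz with rfl | hz
          · exact hCs hxC
          · have h := hDU hz
            rw [hU] at h
            simp only [Finset.coe_filter, Set.mem_setOf_eq] at h
            exact h.1
        have hCeq : C = insert x D := hCmax _ hDs hch hCsub
        have hxnD : x ∉ D := fun h => lt_irrefl x (hxD x h)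
        rw [hCeq, Set.insert_diff_of_mem _ (Set.mem_singleton x),
          Set.diff_singleton_eq_self hxnD]
    -- the injection
    have hinj : ∃ Φ : {C : Set α // MCI s C} →
        (Σ x : {x : α // x ∈ A}, {C : Set α // MCI (U x.1) C}),
        Function.Injective Φ := by
      choose f hf1 hf2 hf3 using main
      refine ⟨fun C => ⟨⟨f C.1 C.2, hf1 C.1 C.2⟩, ⟨C.1 \ {f C.1 C.2}, hf3 C.1 C.2⟩⟩, ?_⟩
      rintro ⟨C, hC⟩ ⟨C', hC'⟩ h
      have h1 : f C hC = f C' hC' :=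
        congrArg (fun p : (Σ x : {x : α // x ∈ A}, {C : Set α // MCI (U x.1) C}) => p.1.1) h
      have h2 : C \ {f C hC} = C' \ {f C' hC'} :=
        congrArg (fun p : (Σ x : {x : α // x ∈ A}, {C : Set α // MCI (U x.1) C}) => p.2.1) h
      have e1 : (C \ {f C hC}) ∪ {f C hC} = C := by
        rw [Set.diff_union_self]
        exact Set.union_eq_self_of_subset_right (Set.singleton_subset_iff.mpr (hf2 C hC))
      have e2 : (C' \ {f C' hC'}) ∪ {f C' hC'} = C' := by
        rw [Set.diff_union_self]
        exact Set.union_eq_self_of_subset_right (Set.singleton_subset_iff.mpr (hf2 C' hC'))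
      have : C = C' := by rw [← e1, ← e2, h2, h1]
      exact Subtype.ext this
    obtain ⟨Φ, hΦ⟩ := hinj
    -- cardinality bound
    have hU_card : ∀ x : α, x ∈ A → (U x).card ≤ s.card - A.card := by
      intro x hx
      have hsub : U x ⊆ s \ A := by
        intro y hy
        rw [hU] at hy
        rw [Finset.mem_filter] at hy
        rw [Finset.mem_sdiff]
        refine ⟨hy.1, fun hyA => ?_⟩
        rw [hA, Finset.mem_filter] at hyA hx
        exact hyA.2 x hx.1 hy.2
      calc (U x).card ≤ (s \ A).card := Finset.card_le_card hsub
        _ = s.card - A.card := Finset.card_sdiff_of_subset hAs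
    have hU_lt : ∀ x : α, x ∈ A → (U x).card < s.card := by
      intro x hx
      apply Finset.card_lt_card
      constructor
      · intro y hy; rw [hU, Finset.mem_filter] at hy; exact hy.1
      · intro hcon
        have hxU : x ∈ U x := hcon (hAs hx)
        rw [hU, Finset.mem_filter] at hxU
        exact lt_irrefl x hxU.2
    have hbound : ∀ x : {x : α // x ∈ A},
        Nat.card {C : Set α // MCI (U x.1) C} ≤ gbd (s.card - A.card) := by
      intro x
      calc Nat.card {C : Set α // MCI (U x.1) C} ≤ gbd (U x.1).card :=
            IH (U x.1) (by have := hU_lt x.1 x.2; omega)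
        _ ≤ gbd (s.card - A.card) := gbd_mono (hU_card x.1 x.2)
    have hsig : Nat.card (Σ x : {x : α // x ∈ A}, {C : Set α // MCI (U x.1) C})
        = ∑ x : {x : α // x ∈ A}, Nat.card {C : Set α // MCI (U x.1) C} := by
      letI : ∀ x : {x : α // x ∈ A}, Fintype {C : Set α // MCI (U x.1) C} :=
        fun x => Fintype.ofFinite _
      simp [Nat.card_eq_fintype_card, Fintype.card_sigma]
    calc Nat.card {C : Set α // MCI s C}
        ≤ Nat.card (Σ x : {x : α // x ∈ A}, {C : Set α // MCI (U x.1) C}) :=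
          Nat.card_le_card_of_injective Φ hΦ
      _ = ∑ x : {x : α // x ∈ A}, Nat.card {C : Set α // MCI (U x.1) C} := hsig
      _ ≤ ∑ _x : {x : α // x ∈ A}, gbd (s.card - A.card) :=
          Finset.sum_le_sum (fun x _ => hbound x)
      _ = A.card * gbd (s.card - A.card) := by
          rw [Finset.sum_const, Finset.card_univ, Fintype.card_coe, smul_eq_mul]
      _ ≤ gbd (s.card - A.card + A.card) :=
          gbd_key A.card _ (Finset.card_pos.mpr hAne)
      _ = gbd s.card := by
          congr 1
          have := Finset.card_le_card hAs
          omega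

omit [DecidableEq α] in
lemma MCI_univ_iff (C : Set α) : MCI (Finset.univ : Finset α) C ↔ IsMaxChain (· ≤ ·) C := by
  constructor
  · rintro ⟨_, hch, hmax⟩
    exact ⟨hch, fun D hD hsub => hmax D (by simp) hD hsub⟩
  · rintro ⟨hch, hmax⟩
    exact ⟨by simp, hch, fun D _ hD hsub => hmax hD hsub⟩

end Upper


section Lower

variable {α : Type*} [Finite α] {L : ℕ}

/-- layered relation -/
def lrel (f : α → Fin L) (x y : α) : Prop := x = y ∨ f x < f y

lemma lrel_po (f : α → Fin L) : IsPartialOrder α (lrel f) where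
  refl x := Or.inl rfl
  trans x y z hxy hyz := by
    rcases hxy with rfl | h1
    · exact hyz
    · rcases hyz with rfl | h2
      · exact Or.inr h1
      · exact Or.inr (h1.trans h2)
  antisymm x y hxy hyx := by
    rcases hxy with rfl | h1
    · rfl
    · rcases hyx with rfl | h2
      · rfl
      · exact absurd (h1.trans h2) (lt_irrefl _)

lemma card_maxchain_layered (f : α → Fin L) (hf : Function.Surjective f) :
    Nat.card {C : Set α // IsMaxChain (lrel f) C} = ∏ v, Nat.card {x : α // f x = v} := by
  classical
  -- the map from sections to maximal chains
  have hchain : ∀ g : ∀ v : Fin L, {x : α // f x = v},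
      IsChain (lrel f) (Set.range fun v => (g v).1) := by
    intro g x hx y hy hne
    obtain ⟨v, rfl⟩ := hx
    obtain ⟨w, rfl⟩ := hy
    have hvw : v ≠ w := fun h => hne (by rw [h])
    rcases lt_or_gt_of_ne hvw with h | h
    · exact Or.inl (Or.inr (by rw [(g v).2, (g w).2]; exact h))
    · exact Or.inr (Or.inr (by rw [(g v).2, (g w).2]; exact h))
  have hmax : ∀ g : ∀ v : Fin L, {x : α // f x = v},
      IsMaxChain (lrel f) (Set.range fun v => (g v).1) := by
    intro g
    refine ⟨hchain g, fun D hD hsub => ?_⟩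
    apply Set.Subset.antisymm hsub
    intro z hz
    have hgz : (g (f z)).1 ∈ D := hsub ⟨f z, rfl⟩
    rcases eq_or_ne z (g (f z)).1 with heq | hne
    · exact ⟨f z, heq.symm⟩
    · rcases hD hz hgz hne with h | h
      · rcases h with h | h
        · exact absurd h hne
        · rw [(g (f z)).2] at h; exact absurd h (lt_irrefl _)
      · rcases h with h | h
        · exact absurd h.symm hne
        · rw [(g (f z)).2] at h; exact absurd h (lt_irrefl _)
  let F : (∀ v : Fin L, {x : α // f x = v}) → {C : Set α // IsMaxChain (lrel f) C} :=
    fun g => ⟨Set.range fun v => (g v).1, hmax g⟩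
  have hFbij : Function.Bijective F := by
    constructor
    · intro g g' h
      have h' : (Set.range fun v => (g v).1) = Set.range fun v => (g' v).1 :=
        congrArg Subtype.val h
      funext v
      have : (g v).1 ∈ Set.range fun w => (g' w).1 := h' ▸ ⟨v, rfl⟩
      obtain ⟨w, hw⟩ := this
      have hw' : (g' w).1 = (g v).1 := hw
      have hvw : w = v := by rw [← (g' w).2, hw', (g v).2]
      exact Subtype.ext (by rw [← hw', hvw])
    · rintro ⟨C, hCch, hCmax⟩
      have hex : ∀ v : Fin L, ∃ x, x ∈ C ∧ f x = v := by
        intro v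
        by_contra hcon
        push_neg at hcon
        obtain ⟨x₀, hx₀⟩ := hf v
        have hch : IsChain (lrel f) (insert x₀ C) := by
          refine hCch.insert (fun y hy hne => ?_)
          have : f y ≠ v := fun h => hcon y hy h
          rcases lt_or_gt_of_ne this with h | h
          · exact Or.inr (Or.inr (by rw [hx₀]; exact h))
          · exact Or.inl (Or.inr (by rw [hx₀]; exact h))
        have := hCmax hch (Set.subset_insert _ _)
        have hx₀C : x₀ ∈ C := by rw [this]; exact Set.mem_insert _ _
        exact hcon x₀ hx₀C hx₀
      have huniq : ∀ x ∈ C, ∀ y ∈ C, f x = f y → x = y := by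
        intro x hx y hy hfe
        by_contra hne
        rcases hCch hx hy hne with h | h
        · rcases h with h | h
          · exact hne h
          · rw [hfe] at h; exact lt_irrefl _ h
        · rcases h with h | h
          · exact hne h.symm
          · rw [hfe] at h; exact lt_irrefl _ h
      choose gg hg1 hg2 using hex
      refine ⟨fun v => ⟨gg v, hg2 v⟩, ?_⟩
      apply Subtype.ext
      show (Set.range fun v => gg v) = C
      apply Set.Subset.antisymm
      · rintro z ⟨v, rfl⟩
        exact hg1 v
      · intro z hz
        exact ⟨f z, huniq _ (hg1 (f z)) _ hz (hg2 (f z))⟩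
  rw [← Nat.card_eq_of_bijective F hFbij, Nat.card_pi]

/-- fiber of `Sigma.fst` -/
def fstFiber {ι : Type*} {β : ι → Type*} (v : ι) : {p : Σ i, β i // p.1 = v} ≃ β v where
  toFun p := cast (congrArg β p.2) p.1.2
  invFun b := ⟨⟨v, b⟩, rfl⟩
  left_inv := by rintro ⟨⟨i, b⟩, rfl⟩; rfl
  right_inv b := rfl

lemma exists_layered (d L : ℕ) (sz : Fin L → ℕ) (hpos : ∀ v, 1 ≤ sz v)
    (hsum : ∑ v, sz v = d) :
    ∃ r : Fin d → Fin d → Prop, IsPartialOrder (Fin d) r ∧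
      Nat.card {C : Set (Fin d) // IsMaxChain r C} = ∏ v, sz v := by
  have hcard : Fintype.card (Σ v : Fin L, Fin (sz v)) = d := by
    simp [Fintype.card_sigma, hsum]
  let e : (Σ v : Fin L, Fin (sz v)) ≃ Fin d := Fintype.equivFinOfCardEq hcard
  let f : Fin d → Fin L := fun x => (e.symm x).1
  have hf : Function.Surjective f := by
    intro v
    exact ⟨e ⟨v, ⟨0, hpos v⟩⟩, by simp [f]⟩
  refine ⟨lrel f, lrel_po f, ?_⟩
  rw [card_maxchain_layered f hf]
  apply Finset.prod_congr rfl
  intro v _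
  have e2 : {x : Fin d // f x = v} ≃ {p : Σ w : Fin L, Fin (sz w) // p.1 = v} :=
    e.symm.subtypeEquiv (fun x => Iff.rfl)
  rw [Nat.card_congr (e2.trans (fstFiber v))]
  simp

end Lower

set_option maxHeartbeats 800000 in
/-- for `d ≥ 5`, the number of maximal chains of any poset on `[d]` is
at most `3^k`, `4·3^(k-1)`, `2·3^k` according to `d = 3k, 3k+1, 3k+2`, and this
bound is attained by some poset on `[d]`. -/
theorem stmt_8 (d k : ℕ) (hd : 5 ≤ d) :
    (∀ r : Fin d → Fin d → Prop, IsPartialOrder (Fin d) r →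
      (d = 3 * k → Nat.card {C : Set (Fin d) // IsMaxChain r C} ≤ 3 ^ k) ∧
      (d = 3 * k + 1 → Nat.card {C : Set (Fin d) // IsMaxChain r C} ≤ 4 * 3 ^ (k - 1)) ∧
      (d = 3 * k + 2 → Nat.card {C : Set (Fin d) // IsMaxChain r C} ≤ 2 * 3 ^ k)) ∧
    (∃ r : Fin d → Fin d → Prop, IsPartialOrder (Fin d) r ∧
      (d = 3 * k → Nat.card {C : Set (Fin d) // IsMaxChain r C} = 3 ^ k) ∧
      (d = 3 * k + 1 → Nat.card {C : Set (Fin d) // IsMaxChain r C} = 4 * 3 ^ (k - 1)) ∧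
      (d = 3 * k + 2 → Nat.card {C : Set (Fin d) // IsMaxChain r C} = 2 * 3 ^ k)) := by
  constructor
  · intro r hr
    letI P : PartialOrder (Fin d) :=
      { le := r
        lt := fun a b => r a b ∧ ¬ r b a
        lt_iff_le_not_ge := fun _ _ => Iff.rfl
        le_refl := hr.toIsPreorder.toRefl.refl
        le_trans := fun a b c => hr.toIsPreorder.toIsTrans.trans a b c
        le_antisymm := fun a b => hr.toAntisymm.antisymm a b }
    have hb : Nat.card {C : Set (Fin d) // IsMaxChain r C} ≤ gbd d := by
      have h1 : Nat.card {C : Set (Fin d) // MCI (Finset.univ : Finset (Fin d)) C}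
          ≤ gbd (Finset.univ : Finset (Fin d)).card := card_MCI_le _ _ le_rfl
      rw [Finset.card_univ, Fintype.card_fin] at h1
      have he : Nat.card {C : Set (Fin d) // IsMaxChain r C}
          = Nat.card {C : Set (Fin d) // MCI (Finset.univ : Finset (Fin d)) C} :=
        Nat.card_congr (Equiv.subtypeEquivRight (fun C => (MCI_univ_iff C).symm))
      rw [he]
      exact h1
    refine ⟨fun h => ?_, fun h => ?_, fun h => ?_⟩
    · have hg : gbd d = 3 ^ k := by rw [h]; exact gbd_3k k
      exact hg ▸ hb
    · have hg : gbd d = 4 * 3 ^ (k - 1) := by rw [h]; exact gbd_3k1 k (by omega)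
      exact hg ▸ hb
    · have hg : gbd d = 2 * 3 ^ k := by rw [h]; exact gbd_3k2 k
      exact hg ▸ hb
  · by_cases h0 : d = 3 * k
    · obtain ⟨r, hr, hcard⟩ := exists_layered d k (fun _ => 3) (fun _ => by norm_num)
        (by simp [Finset.sum_const, Finset.card_univ, mul_comm, h0])
      refine ⟨r, hr, fun _ => ?_, fun h => by exfalso; omega, fun h => by exfalso; omega⟩
      rw [hcard]
      simp [Finset.prod_const, Finset.card_univ]
    · by_cases h1 : d = 3 * k + 1
      · obtain ⟨m, rfl⟩ : ∃ m, k = m + 1 := ⟨k - 1, by omega⟩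
        obtain ⟨r, hr, hcard⟩ := exists_layered d (m + 1) (Fin.cons 4 (fun _ => 3))
          (fun v => by refine Fin.cases ?_ ?_ v <;> simp)
          (by rw [Fin.sum_cons]; simp [Finset.sum_const, Finset.card_univ]; omega)
        refine ⟨r, hr, fun h => by exfalso; omega, fun _ => ?_, fun h => by exfalso; omega⟩
        rw [hcard, Fin.prod_cons]
        simp [Finset.prod_const, Finset.card_univ]
      · by_cases h2 : d = 3 * k + 2
        · obtain ⟨r, hr, hcard⟩ := exists_layered d (k + 1) (Fin.cons 2 (fun _ => 3))
            (fun v => by refine Fin.cases ?_ ?_ v <;> simp)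
            (by rw [Fin.sum_cons]; simp [Finset.sum_const, Finset.card_univ]; omega)
          refine ⟨r, hr, fun h => by exfalso; omega, fun h => by exfalso; omega, fun _ => ?_⟩
          rw [hcard, Fin.prod_cons]
          simp [Finset.prod_const, Finset.card_univ]
        · refine ⟨Eq, ?_, fun h => by exfalso; omega, fun h => by exfalso; omega,
            fun h => by exfalso; omega⟩
          exact { refl := fun a => rfl
                  trans := fun a b c hab hbc => hab.trans hbc
                  antisymm := fun a b hab _ => hab }
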